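/- For every z ∈ Ĥ whose continued fraction algorithm does not terminate, the series Σ_{i=1}^∞ deg(f_i) of degrees of its continued fraction coefficients diverges to ∞, and z is the limit of its approximants x_n(z) = [f₀, …, f_n]. -/

import Mathlib

universe u

/-- Evaluation of a finite continued fraction `[f₀, f₁, …, f_N]` in a field,
`cfEval [a] = a`, `cfEval (a :: l) = a + (cfEval l)⁻¹` (with the convention `0⁻¹ = 0`). -/
def cfEval {L : Type u} [Field L] : List L → L
  | [] => 0
  | a :: l => a + (cfEval l)⁻¹

/-- The Moebius maps `ρ_n = σ_n ∘ ⋯ ∘ σ_0`, where `σ_i x = (x - f_i)⁻¹`. -/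
def rho {L : Type u} [Field L] (f : ℕ → L) : ℕ → L → L
  | 0, x => (x - f 0)⁻¹
  | n + 1, x => (rho f n x - f (n + 1))⁻¹

/-- The derivative `ρ_n'` of `ρ_n`, computed by the chain rule from
`σ_i'(x) = -((x - f_i)⁻¹)²`. -/
def rho' {L : Type u} [Field L] (f : ℕ → L) : ℕ → L → L
  | 0, x => -((x - f 0)⁻¹) ^ 2
  | n + 1, x => -((rho f n x - f (n + 1))⁻¹) ^ 2 * rho' f n x

/-- An abstract presentation of the completion `K̂` of the Puiseux field
`E⟨⟨t⁻¹⟩⟩` over a field `E`.  The field `K` carries an additive valuation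
`ν` with values in `ℚ` on nonzero elements (normalized by `ν (t^r) = -r`,
where `mono r` plays the role of the monomial `t^r`), the subfield `E` is
embedded via `emb`, the simple "Laurent Puiseux polynomials" (the ring
generated by `E` and all rational powers of `t`) are dense, and `K` is
complete for `ν`. -/
structure PuiseuxCompletion (E : Type u) [Field E] where
  K : Type u
  [fieldK : Field K]
  ν : K → ℚ
  emb : E →+* K
  mono : ℚ → K
  mono_zero : mono 0 = 1
  mono_mul : ∀ r s : ℚ, mono r * mono s = mono (r + s)
  ν_mono : ∀ r : ℚ, ν (mono r) = -r
  ν_emb : ∀ e : E, e ≠ 0 → ν (emb e) = 0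
  ν_mul : ∀ x y : K, x ≠ 0 → y ≠ 0 → ν (x * y) = ν x + ν y
  ν_add : ∀ x y : K, x ≠ 0 → y ≠ 0 → x + y ≠ 0 → min (ν x) (ν y) ≤ ν (x + y)
  dense' : ∀ z : K, ∀ C : ℚ,
    ∃ f ∈ Subring.closure (Set.range emb ∪ Set.range mono), z = f ∨ C < ν (z - f)
  complete' : ∀ uSeq : ℕ → K,
    (∀ C : ℚ, ∃ N : ℕ, ∀ m ≥ N, ∀ n ≥ N, uSeq m = uSeq n ∨ C < ν (uSeq m - uSeq n)) →
    ∃ z : K, ∀ C : ℚ, ∃ N : ℕ, ∀ n ≥ N, uSeq n = z ∨ C < ν (uSeq n - z)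

attribute [instance] PuiseuxCompletion.fieldK

namespace PuiseuxCompletion

variable {E : Type u} [Field E] (P : PuiseuxCompletion E)

/-- The ring `Ā = E⟨t⟩` of Puiseux polynomials: finite `E`-linear combinations of
nonnegative rational powers of `t`. -/
def Abar : Subring P.K :=
  Subring.closure (Set.range P.emb ∪ P.mono '' {r : ℚ | 0 ≤ r})

/-- `deg f = -ν f`. -/
def deg (f : P.K) : ℚ := -P.ν f

/-- The rational Puiseux field `k̃ = Quot(Ā) = ⋃ₙ E(t^{1/n})`, as a subfield of `K̂`. -/
def ktilde : Subfield P.K := Subfield.closure (P.Abar : Set P.K)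

/-- `uSeq n → z` with respect to the valuation `ν`. -/
def TendsTo (uSeq : ℕ → P.K) (z : P.K) : Prop :=
  ∀ C : ℚ, ∃ N : ℕ, ∀ n ≥ N, uSeq n = z ∨ C < P.ν (uSeq n - z)

/-- One step of the continued fraction algorithm succeeds at index `i`:
`f i` is the Puiseux polynomial with `ν (z_i - f i) > 0`, the fraction does not
end at `i` (`z_i ≠ f i`), and `z_{i+1} = (z_i - f i)⁻¹`. -/
def CFStep (f zs : ℕ → P.K) (i : ℕ) : Prop :=
  f i ∈ P.Abar ∧ 0 < P.ν (zs i - f i) ∧ zs i ≠ f i ∧ zs (i + 1) = (zs i - f i)⁻¹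

/-- The `n`-th approximant `x_n = [f₀, …, f_n]_{ev}`. -/
def approx (f : ℕ → P.K) (n : ℕ) : P.K :=
  cfEval (List.ofFn fun i : Fin (n + 1) => f i)

/-- The continued fraction of `z` begins with the coefficients `f 0, …, f n`. -/
def CFBegins (f : ℕ → P.K) (n : ℕ) (z : P.K) : Prop :=
  ∃ zs : ℕ → P.K, zs 0 = z ∧ (∀ i < n, P.CFStep f zs i) ∧
    f n ∈ P.Abar ∧ (zs n = f n ∨ 0 < P.ν (zs n - f n))

/-- `z` is the value of the continued fraction expression with coefficients `f`
and length `L` (finite or infinite); the coefficients are Puiseux polynomials of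
positive degree after the zeroth one. -/
def CFExprEval (f : ℕ → P.K) (L : WithTop ℕ) (z : P.K) : Prop :=
  f 0 ∈ P.Abar ∧
  (∀ i : ℕ, 1 ≤ i → (i : WithTop ℕ) ≤ L → f i ∈ P.Abar ∧ 0 < P.deg (f i)) ∧
  ((∃ N : ℕ, L = (N : WithTop ℕ) ∧ z = P.approx f N) ∨
    (L = ⊤ ∧ P.TendsTo (fun n => P.approx f n) z))

/-- The equivalence relation `(a, r) ~ (a', r')` iff `r = r'` and `ν (a - a') ≥ r`
(the pairs define the same Berkovich point `η_{a,r}` of type II or III). -/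
def ballEquiv (p q : P.K × ℝ) : Prop :=
  p.2 = q.2 ∧ (p.1 = q.1 ∨ p.2 ≤ (P.ν (p.1 - q.1) : ℝ))

open scoped Classical in
/-- The Berkovich hyperbolic distance, computed on representatives. -/
noncomputable def berkDist (p q : P.K × ℝ) : ℝ :=
  if p.1 = q.1 ∨ min p.2 q.2 ≤ (P.ν (p.1 - q.1) : ℝ) then |p.2 - q.2|
  else p.2 + q.2 - 2 * (P.ν (p.1 - q.1) : ℝ)

/-- The closed ball `B_a^{[r]} = {b : ν (b - a) ≥ r}` corresponding to `η_{a,r}`. -/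
def closedBall (a : P.K) (r : ℝ) : Set P.K :=
  {b : P.K | b = a ∨ r ≤ (P.ν (b - a) : ℝ)}

/-- The Moebius transformation associated to a `2 × 2` matrix. -/
def mob (g : Matrix (Fin 2) (Fin 2) P.K) (x : P.K) : P.K :=
  (g 0 0 * x + g 0 1) / (g 1 0 * x + g 1 1)

/-- The ring `A_M = E[t^{1/M}]`. -/
def AM (M : ℕ) : Subring P.K :=
  Subring.closure (Set.range P.emb ∪ {P.mono (1 / (M : ℚ))})

/-- The field `E(t^{1/M})`, whose `ν`-completion inside `K̂` is `K_M = E((t^{-1/M}))`. -/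
def kM (M : ℕ) : Subfield P.K :=
  Subfield.closure (Set.range P.emb ∪ {P.mono (1 / (M : ℚ))})

lemma nu_one : P.ν 1 = 0 := by
  have := P.ν_mono 0; rwa [P.mono_zero, neg_zero] at this

lemma mono_ne_zero (r : ℚ) : P.mono r ≠ 0 := by
  intro h
  have h1 : P.mono r * P.mono (-r) = 1 := by rw [P.mono_mul, add_neg_cancel, P.mono_zero]
  rw [h, zero_mul] at h1; exact (zero_ne_one h1)

lemma nu_neg {x : P.K} (hx : x ≠ 0) : P.ν (-x) = P.ν x := by
  have hm : P.ν (-1 : P.K) = 0 := by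
    have h := P.ν_mul (-1) (-1) (by simp) (by simp)
    rw [neg_mul_neg, one_mul, P.nu_one] at h; linarith
  have := P.ν_mul (-1) x (by simp) hx
  rw [neg_one_mul, hm] at this; linarith

lemma nu_inv {x : P.K} (hx : x ≠ 0) : P.ν x⁻¹ = -P.ν x := by
  have := P.ν_mul x x⁻¹ hx (inv_ne_zero hx)
  rw [mul_inv_cancel₀ hx, P.nu_one] at this; linarith

lemma nu_pow {x : P.K} (hx : x ≠ 0) (n : ℕ) : P.ν (x ^ n) = n * P.ν x := by
  induction n with
  | zero => simp [P.nu_one]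
  | succ n ih =>
    rw [pow_succ, P.ν_mul _ _ (pow_ne_zero _ hx) hx, ih]; push_cast; ring

lemma nu_add_eq {x y : P.K} (hx : x ≠ 0) (hy : y ≠ 0) (h : P.ν x < P.ν y) :
    x + y ≠ 0 ∧ P.ν (x + y) = P.ν x := by
  have hne : x + y ≠ 0 := by
    intro h0
    have hyx : y = -x := by linear_combination h0
    rw [hyx, P.nu_neg hx] at h; exact lt_irrefl _ h
  refine ⟨hne, ?_⟩
  have h1 := P.ν_add x y hx hy hne
  rw [min_eq_left h.le] at h1
  by_contra hne2
  have h2 : P.ν x < P.ν (x + y) := lt_of_le_of_ne h1 (Ne.symm hne2)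
  have h3 := P.ν_add (x + y) (-y) hne (neg_ne_zero.mpr hy) (by rw [add_neg_cancel_right]; exact hx)
  rw [add_neg_cancel_right, P.nu_neg hy] at h3
  have := lt_min h2 h
  linarith [this, h3]

lemma mono_pow (r : ℚ) (n : ℕ) : P.mono r ^ n = P.mono (n * r) := by
  induction n with
  | zero => simp [P.mono_zero]
  | succ n ih => rw [pow_succ, ih, P.mono_mul]; congr 1; push_cast; ring

lemma emb_ne_zero {e : E} (he : e ≠ 0) : P.emb e ≠ 0 := by
  intro h
  have : P.emb e * P.emb e⁻¹ = 1 := by rw [← map_mul, mul_inv_cancel₀ he, map_one]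
  rw [h, zero_mul] at this; exact (zero_ne_one this)


open Polynomial in
lemma nu_eval (r : ℚ) (hr : 0 < r) :
    ∀ (p : Polynomial E), p ≠ 0 →
      eval₂ P.emb (P.mono r) p ≠ 0 ∧
      P.ν (eval₂ P.emb (P.mono r) p) = -(p.natDegree : ℚ) * r := by
  suffices H : ∀ n (p : Polynomial E), p.natDegree ≤ n → p ≠ 0 →
      eval₂ P.emb (P.mono r) p ≠ 0 ∧
      P.ν (eval₂ P.emb (P.mono r) p) = -(p.natDegree : ℚ) * r by
    exact fun p hp => H p.natDegree p le_rfl hp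
  intro n
  induction n with
  | zero =>
    intro p hdeg hp
    rcases p.eraseLead_natDegree_lt_or_eraseLead_eq_zero with h | h
    · omega
    · have hpe : p = C p.leadingCoeff * X ^ p.natDegree := by
        have := p.eraseLead_add_C_mul_X_pow
        rw [h, zero_add] at this; exact this.symm
      have hlc : p.leadingCoeff ≠ 0 := leadingCoeff_ne_zero.mpr hp
      constructor
      · rw [hpe]
        simp only [eval₂_mul, eval₂_C, eval₂_X_pow]
        exact mul_ne_zero (P.emb_ne_zero hlc) (pow_ne_zero _ (P.mono_ne_zero r))
      · rw [hpe]
        simp only [eval₂_mul, eval₂_C, eval₂_X_pow]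
        rw [P.ν_mul _ _ (P.emb_ne_zero hlc) (pow_ne_zero _ (P.mono_ne_zero r)),
          P.ν_emb _ hlc, P.nu_pow (P.mono_ne_zero r), P.ν_mono]
        rw [natDegree_C_mul_X_pow _ _ hlc]
        ring
  | succ n ih =>
    intro p hdeg hp
    have hlc : p.leadingCoeff ≠ 0 := leadingCoeff_ne_zero.mpr hp
    set t : Polynomial E := C p.leadingCoeff * X ^ p.natDegree with ht
    have htne : eval₂ P.emb (P.mono r) t ≠ 0 := by
      simp only [ht, eval₂_mul, eval₂_C, eval₂_X_pow]
      exact mul_ne_zero (P.emb_ne_zero hlc) (pow_ne_zero _ (P.mono_ne_zero r))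
    have htν : P.ν (eval₂ P.emb (P.mono r) t) = -(p.natDegree : ℚ) * r := by
      simp only [ht, eval₂_mul, eval₂_C, eval₂_X_pow]
      rw [P.ν_mul _ _ (P.emb_ne_zero hlc) (pow_ne_zero _ (P.mono_ne_zero r)),
        P.ν_emb _ hlc, P.nu_pow (P.mono_ne_zero r), P.ν_mono]
      ring
    have hsplit : p = p.eraseLead + t := by
      have := p.eraseLead_add_C_mul_X_pow; rw [← ht] at this; exact this.symm
    have hsum : eval₂ P.emb (P.mono r) p
        = eval₂ P.emb (P.mono r) p.eraseLead + eval₂ P.emb (P.mono r) t := by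
      have := congrArg (eval₂ P.emb (P.mono r)) hsplit
      rwa [eval₂_add] at this
    by_cases hel : p.eraseLead = 0
    · rw [hsum, hel, eval₂_zero, zero_add]
      exact ⟨htne, by rw [htν]⟩
    · have h : p.eraseLead.natDegree < p.natDegree :=
        (p.eraseLead_natDegree_lt_or_eraseLead_eq_zero).resolve_right hel
      obtain ⟨hne1, hν1⟩ := ih p.eraseLead (by omega) hel
      have hlt : P.ν (eval₂ P.emb (P.mono r) t) < P.ν (eval₂ P.emb (P.mono r) p.eraseLead) := by
        rw [htν, hν1]
        have : (p.eraseLead.natDegree : ℚ) < (p.natDegree : ℚ) := by exact_mod_cast h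
        nlinarith
      obtain ⟨hs1, hs2⟩ := P.nu_add_eq htne hne1 hlt
      constructor
      · rw [hsum, add_comm]; exact hs1
      · rw [hsum, add_comm, hs2, htν]


open Polynomial

/-- Membership in the polynomial subring generated by `E` and `mono r`. -/
lemma mem_ring_closure_iff (r : ℚ) (x : P.K) :
    x ∈ Subring.closure (Set.range P.emb ∪ {P.mono r}) ↔
      ∃ p : Polynomial E, eval₂ P.emb (P.mono r) p = x := by
  constructor
  · intro hx
    have hle : Subring.closure (Set.range P.emb ∪ {P.mono r})
        ≤ (eval₂RingHom P.emb (P.mono r)).range := by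
      rw [Subring.closure_le]
      rintro y (⟨e, rfl⟩ | hy)
      · exact ⟨C e, eval₂_C _ _⟩
      · rw [Set.mem_singleton_iff] at hy
        exact ⟨X, by rw [coe_eval₂RingHom, eval₂_X, hy]⟩
    exact hle hx
  · rintro ⟨p, rfl⟩
    induction p using Polynomial.induction_on' with
    | add p q hp hq => rw [eval₂_add]; exact add_mem hp hq
    | monomial n a =>
      rw [eval₂_monomial]
      have h1 : P.emb a ∈ Subring.closure (Set.range P.emb ∪ {P.mono r}) :=
        Subring.subset_closure (Or.inl ⟨a, rfl⟩)
      have h2 : P.mono r ∈ Subring.closure (Set.range P.emb ∪ {P.mono r}) :=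
        Subring.subset_closure (Or.inr rfl)
      exact mul_mem h1 (pow_mem h2 n)

lemma eval_mem_abar (r : ℚ) (hr : 0 ≤ r) (p : Polynomial E) :
    eval₂ P.emb (P.mono r) p ∈ P.Abar := by
  induction p using Polynomial.induction_on' with
  | add p q hp hq => rw [eval₂_add]; exact add_mem hp hq
  | monomial n a =>
    rw [eval₂_monomial]
    have h1 : P.emb a ∈ P.Abar := Subring.subset_closure (Or.inl ⟨a, rfl⟩)
    have h2 : P.mono r ∈ P.Abar := Subring.subset_closure (Or.inr ⟨r, hr, rfl⟩)
    exact mul_mem h1 (pow_mem h2 n)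

/-- Rescaling a polynomial representation to a finer monomial. -/
lemma rep_dvd {M1 M : ℕ} (h1 : 0 < M1) (hdvd : M1 ∣ M) (hM : 0 < M) {x : P.K}
    (hx : ∃ p : Polynomial E, eval₂ P.emb (P.mono (1 / (M1 : ℚ))) p = x) :
    ∃ p : Polynomial E, eval₂ P.emb (P.mono (1 / (M : ℚ))) p = x := by
  obtain ⟨p, rfl⟩ := hx
  obtain ⟨k, rfl⟩ := hdvd
  refine ⟨p.comp (X ^ k), ?_⟩
  rw [eval₂_comp, eval₂_X_pow, P.mono_pow]
  congr 2
  have hk : 0 < k := Nat.pos_of_ne_zero fun h => by simp [h] at hM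
  have hM1 : ((M1 : ℚ)) ≠ 0 := by positivity
  have hk' : ((k : ℚ)) ≠ 0 := by positivity
  push_cast
  field_simp

lemma kM_mono {M1 M2 : ℕ} (h1 : 0 < M1) (hdvd : M1 ∣ M2) (h2 : 0 < M2) :
    P.kM M1 ≤ P.kM M2 := by
  have key : Subfield.closure (Set.range P.emb ∪ {P.mono (1 / (M1 : ℚ))}) ≤ P.kM M2 := by
    apply Subfield.closure_le.mpr
    rintro y (⟨e, rfl⟩ | hy)
    · exact Subfield.subset_closure (Or.inl ⟨e, rfl⟩)
    · rw [Set.mem_singleton_iff] at hy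
      subst hy
      obtain ⟨k, rfl⟩ := hdvd
      have hk : 0 < k := Nat.pos_of_ne_zero fun h => by simp [h] at h2
      have hu : P.mono (1 / ((M1 * k : ℕ) : ℚ)) ∈ P.kM (M1 * k) :=
        Subfield.subset_closure (Or.inr rfl)
      have heq : P.mono (1 / ((M1 * k : ℕ) : ℚ)) ^ k = P.mono (1 / (M1 : ℚ)) := by
        rw [P.mono_pow]
        congr 1
        have hM1 : ((M1 : ℚ)) ≠ 0 := by positivity
        have hk' : ((k : ℚ)) ≠ 0 := by positivity
        push_cast
        field_simp
      rw [← heq]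
      exact pow_mem hu k
  exact key

lemma mono_mem_kM (r : ℚ) : P.mono r ∈ P.kM r.den := by
  have hu : P.mono (1 / (r.den : ℚ)) ∈ P.kM r.den := Subfield.subset_closure (Or.inr rfl)
  rcases le_or_gt 0 r.num with h | h
  · have hcast : ((r.num.toNat : ℕ) : ℚ) = (r.num : ℚ) := by
      exact_mod_cast congrArg (Int.cast : ℤ → ℚ) (Int.toNat_of_nonneg h)
    have heq : P.mono (1 / (r.den : ℚ)) ^ r.num.toNat = P.mono r := by
      rw [P.mono_pow, hcast, mul_one_div, Rat.num_div_den]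
    rw [← heq]; exact pow_mem hu _
  · have hcast : (((-r.num).toNat : ℕ) : ℚ) = -(r.num : ℚ) := by
      exact_mod_cast congrArg (Int.cast : ℤ → ℚ)
        (Int.toNat_of_nonneg (by omega : (0:ℤ) ≤ -r.num))
    have hmul : P.mono (1 / (r.den : ℚ)) ^ (-r.num).toNat * P.mono r = 1 := by
      rw [P.mono_pow, hcast, P.mono_mul, mul_one_div, neg_div, Rat.num_div_den,
        neg_add_cancel, P.mono_zero]
    have heq : P.mono r = (P.mono (1 / (r.den : ℚ)) ^ (-r.num).toNat)⁻¹ :=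
      eq_inv_of_mul_eq_one_right hmul
    rw [heq]; exact inv_mem (pow_mem hu _)

/-- Every "Laurent Puiseux polynomial" lies in some `kM`. -/
lemma laurent_rep {x : P.K}
    (hx : x ∈ Subring.closure (Set.range P.emb ∪ Set.range P.mono)) :
    ∃ M : ℕ, 0 < M ∧ x ∈ P.kM M := by
  induction hx using Subring.closure_induction with
  | mem y hy =>
    rcases hy with ⟨e, rfl⟩ | ⟨r, rfl⟩
    · exact ⟨1, one_pos, Subfield.subset_closure (Or.inl ⟨e, rfl⟩)⟩
    · exact ⟨r.den, r.den_pos, P.mono_mem_kM r⟩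
  | zero => exact ⟨1, one_pos, zero_mem _⟩
  | one => exact ⟨1, one_pos, one_mem _⟩
  | add a b ha hb iha ihb =>
    obtain ⟨M1, hM1, h1⟩ := iha
    obtain ⟨M2, hM2, h2⟩ := ihb
    exact ⟨M1 * M2, by positivity,
      add_mem (P.kM_mono hM1 ⟨M2, rfl⟩ (by positivity) h1)
        (P.kM_mono hM2 ⟨M1, mul_comm _ _⟩ (by positivity) h2)⟩
  | neg a ha iha =>
    obtain ⟨M, hM, h⟩ := iha
    exact ⟨M, hM, neg_mem h⟩
  | mul a b ha hb iha ihb =>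
    obtain ⟨M1, hM1, h1⟩ := iha
    obtain ⟨M2, hM2, h2⟩ := ihb
    exact ⟨M1 * M2, by positivity,
      mul_mem (P.kM_mono hM1 ⟨M2, rfl⟩ (by positivity) h1)
        (P.kM_mono hM2 ⟨M1, mul_comm _ _⟩ (by positivity) h2)⟩


/-- Every Puiseux polynomial is a polynomial in some `mono (1/M)`. -/
lemma abar_rep {x : P.K} (hx : x ∈ P.Abar) :
    ∃ M : ℕ, 0 < M ∧ ∃ p : Polynomial E, eval₂ P.emb (P.mono (1 / (M : ℚ))) p = x := by
  induction hx using Subring.closure_induction with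
  | mem y hy =>
    rcases hy with ⟨e, rfl⟩ | ⟨r, hr, rfl⟩
    · exact ⟨1, one_pos, C e, eval₂_C _ _⟩
    · refine ⟨r.den, r.den_pos, X ^ r.num.toNat, ?_⟩
      rw [eval₂_X_pow, P.mono_pow]
      congr 1
      have hcast : ((r.num.toNat : ℕ) : ℚ) = (r.num : ℚ) := by
        exact_mod_cast congrArg (Int.cast : ℤ → ℚ)
          (Int.toNat_of_nonneg (Rat.num_nonneg.mpr hr))
      rw [hcast, mul_one_div, Rat.num_div_den]
  | zero => exact ⟨1, one_pos, 0, by simp⟩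
  | one => exact ⟨1, one_pos, 1, by simp⟩
  | add a b ha hb iha ihb =>
    obtain ⟨M1, hM1, h1⟩ := iha
    obtain ⟨M2, hM2, h2⟩ := ihb
    have hM : 0 < M1 * M2 := by positivity
    obtain ⟨p, hp⟩ := P.rep_dvd hM1 ⟨M2, rfl⟩ hM h1
    obtain ⟨q, hq⟩ := P.rep_dvd hM2 ⟨M1, mul_comm _ _⟩ hM h2
    exact ⟨M1 * M2, hM, p + q, by rw [eval₂_add, hp, hq]⟩
  | neg a ha iha =>
    obtain ⟨M, hM, p, hp⟩ := iha
    exact ⟨M, hM, -p, by rw [eval₂_neg, hp]⟩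
  | mul a b ha hb iha ihb =>
    obtain ⟨M1, hM1, h1⟩ := iha
    obtain ⟨M2, hM2, h2⟩ := ihb
    have hM : 0 < M1 * M2 := by positivity
    obtain ⟨p, hp⟩ := P.rep_dvd hM1 ⟨M2, rfl⟩ hM h1
    obtain ⟨q, hq⟩ := P.rep_dvd hM2 ⟨M1, mul_comm _ _⟩ hM h2
    exact ⟨M1 * M2, hM, p * q, by rw [eval₂_mul, hp, hq]⟩

/-- Nonzero Puiseux polynomials have nonpositive valuation. -/
lemma abar_nu {x : P.K} (hx : x ∈ P.Abar) (hne : x ≠ 0) : P.ν x ≤ 0 := by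
  obtain ⟨M, hM, p, hp⟩ := P.abar_rep hx
  have hp0 : p ≠ 0 := by rintro rfl; simp at hp; exact hne hp.symm
  have hr : (0:ℚ) < 1 / (M : ℚ) := by positivity
  obtain ⟨-, hν⟩ := P.nu_eval _ hr p hp0
  rw [hp] at hν
  rw [hν]
  have : (0:ℚ) ≤ (p.natDegree : ℚ) := by positivity
  nlinarith

/-- Two Puiseux polynomials at distance of positive valuation are equal. -/
lemma abar_unique {x y : P.K} (hx : x ∈ P.Abar) (hy : y ∈ P.Abar)
    (h : x - y ≠ 0 → 0 < P.ν (x - y)) : x = y := by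
  by_contra hne
  have hs : x - y ≠ 0 := sub_ne_zero_of_ne hne
  exact absurd (h hs) (not_lt.mpr (P.abar_nu (sub_mem hx hy) hs))

/-- Division with remainder: every element of `kM` is close to a polynomial in `mono (1/M)`. -/
lemma kM_div {M : ℕ} (hM : 0 < M) {x : P.K} (hx : x ∈ P.kM M) :
    ∃ p : Polynomial E, x = eval₂ P.emb (P.mono (1 / (M : ℚ))) p ∨
      (x - eval₂ P.emb (P.mono (1 / (M : ℚ))) p ≠ 0 ∧
        0 < P.ν (x - eval₂ P.emb (P.mono (1 / (M : ℚ))) p)) := by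
  set u : P.K := P.mono (1 / (M : ℚ)) with hu
  have hr : (0:ℚ) < 1 / (M : ℚ) := by positivity
  rw [kM, Subfield.mem_closure_iff] at hx
  obtain ⟨y, hy, w, hw, hyw⟩ := hx
  obtain ⟨a, ha⟩ := (P.mem_ring_closure_iff _ y).mp hy
  obtain ⟨b, hb⟩ := (P.mem_ring_closure_iff _ w).mp hw
  by_cases hb0 : b = 0
  · refine ⟨0, Or.inl ?_⟩
    rw [eval₂_zero, ← hyw, ← hb, hb0, eval₂_zero, div_zero]
  -- nonzero denominator
  have hlc : b.leadingCoeff ≠ 0 := leadingCoeff_ne_zero.mpr hb0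
  set b' : Polynomial E := b * C b.leadingCoeff⁻¹ with hb'
  have hmonic : b'.Monic := monic_mul_leadingCoeff_inv hb0
  set qd : Polynomial E := a /ₘ b' with hqd
  set rm : Polynomial E := a %ₘ b' with hrm
  have hdiv : rm + b' * qd = a := modByMonic_add_div a b'
  have hbne : eval₂ P.emb u b ≠ 0 := (P.nu_eval _ hr b hb0).1
  have hxeq : x = eval₂ P.emb u a / eval₂ P.emb u b := by rw [← hyw, ha, hb]
  refine ⟨C b.leadingCoeff⁻¹ * qd, ?_⟩
  have hkey : x - eval₂ P.emb u (C b.leadingCoeff⁻¹ * qd)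
      = eval₂ P.emb u rm / eval₂ P.emb u b := by
    rw [hxeq]
    rw [div_sub' hbne]
    congr 1
    have : eval₂ P.emb u a = eval₂ P.emb u rm + eval₂ P.emb u b' * eval₂ P.emb u qd := by
      rw [← eval₂_mul, ← eval₂_add, hdiv]
    rw [this, hb']
    rw [eval₂_mul, eval₂_mul, eval₂_C]
    ring
  by_cases hrm0 : rm = 0
  · left
    have h2 := hkey
    rw [hrm0, eval₂_zero, zero_div] at h2
    exact sub_eq_zero.mp h2
  · right
    have hrne : eval₂ P.emb u rm ≠ 0 := (P.nu_eval _ hr rm hrm0).1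
    have hdeg : rm.natDegree < b.natDegree := by
      apply natDegree_lt_natDegree hrm0
      have h1 : rm.degree < b'.degree := degree_modByMonic_lt a hmonic
      rwa [hb', degree_mul_leadingCoeff_inv b hb0] at h1
    constructor
    · rw [hkey]; exact div_ne_zero hrne hbne
    · rw [hkey, div_eq_mul_inv,
        P.ν_mul _ _ hrne (inv_ne_zero hbne), P.nu_inv hbne,
        (P.nu_eval _ hr rm hrm0).2, (P.nu_eval _ hr b hb0).2]
      have : (rm.natDegree : ℚ) < (b.natDegree : ℚ) := by exact_mod_cast hdeg
      nlinarith

/-- Polynomials in `mono (1/M)` are in `kM` and in `Abar`. -/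
lemma eval_mem_kM (M : ℕ) (p : Polynomial E) :
    eval₂ P.emb (P.mono (1 / (M : ℚ))) p ∈ P.kM M := by
  have h := (P.mem_ring_closure_iff (1 / (M : ℚ)) _).mpr ⟨p, rfl⟩
  exact Subfield.subring_closure_le _ h

end PuiseuxCompletion

/-- Numerator continuants. -/
def contA {L : Type u} [Field L] (f : ℕ → L) : ℕ → L
  | 0 => 1
  | 1 => f 0
  | (n+2) => f (n+1) * contA f (n+1) + contA f n

/-- Denominator continuants. -/
def contB {L : Type u} [Field L] (f : ℕ → L) : ℕ → L
  | 0 => 0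
  | 1 => 1
  | (n+2) => f (n+1) * contB f (n+1) + contB f n

lemma contA_zero {L : Type u} [Field L] (f : ℕ → L) : contA f 0 = 1 := rfl
lemma contA_one {L : Type u} [Field L] (f : ℕ → L) : contA f 1 = f 0 := rfl
lemma contA_succ {L : Type u} [Field L] (f : ℕ → L) (n : ℕ) :
    contA f (n+2) = f (n+1) * contA f (n+1) + contA f n := rfl
lemma contB_zero {L : Type u} [Field L] (f : ℕ → L) : contB f 0 = 0 := rfl
lemma contB_one {L : Type u} [Field L] (f : ℕ → L) : contB f 1 = 1 := rfl
lemma contB_succ {L : Type u} [Field L] (f : ℕ → L) (n : ℕ) :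
    contB f (n+2) = f (n+1) * contB f (n+1) + contB f n := rfl

lemma contB_shift {L : Type u} [Field L] (f : ℕ → L) :
    ∀ n : ℕ, contB f (n+1) = contA (fun i => f (i+1)) n := by
  intro n
  induction n using Nat.twoStepInduction with
  | zero => simp [contB_one, contA_zero]
  | one => simp [contB_succ, contB_one, contB_zero, contA_one]
  | more n ih1 ih2 =>
    rw [contB_succ, contA_succ, ih1, ih2]

lemma contA_shift {L : Type u} [Field L] (f : ℕ → L) :
    ∀ n : ℕ, contA f (n+1) = f 0 * contA (fun i => f (i+1)) n + contB (fun i => f (i+1)) n := by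
  intro n
  induction n using Nat.twoStepInduction with
  | zero => simp [contA_one, contA_zero, contB_zero]
  | one => simp [contA_succ, contA_one, contA_zero, contB_one]; ring
  | more n ih1 ih2 =>
    rw [contA_succ, contA_succ (fun i => f (i+1)), contB_succ (fun i => f (i+1)), ih1, ih2]
    ring

lemma cont_det {L : Type u} [Field L] (f : ℕ → L) :
    ∀ n : ℕ, contA f n * contB f (n+1) - contA f (n+1) * contB f n = (-1) ^ n := by
  intro n
  induction n with
  | zero => simp [contA_zero, contA_one, contB_zero, contB_one]
  | succ n ih =>
    rw [contA_succ, contB_succ, pow_succ]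
    linear_combination (-1 : L) * ih

namespace PuiseuxCompletion

variable {E : Type u} [Field E] (P : PuiseuxCompletion E)

lemma cont_nuA {f : ℕ → P.K} (hneg : ∀ i, f i ≠ 0 ∧ P.ν (f i) < 0) :
    ∀ n : ℕ, contA f (n+1) ≠ 0 ∧
      P.ν (contA f (n+1)) = ∑ i ∈ Finset.range (n+1), P.ν (f i) := by
  intro n
  induction n using Nat.twoStepInduction with
  | zero => simpa [contA_one] using (hneg 0).1
  | one =>
    have h0 := hneg 0; have h1 := hneg 1
    have hx : f 1 * contA f 1 ≠ 0 := by
      rw [contA_one]; exact mul_ne_zero h1.1 h0.1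
    have hν : P.ν (f 1 * contA f 1) = P.ν (f 0) + P.ν (f 1) := by
      rw [contA_one, P.ν_mul _ _ h1.1 h0.1]; ring
    have hlt : P.ν (f 1 * contA f 1) < P.ν (contA f 0) := by
      rw [hν, contA_zero, P.nu_one]; linarith [h0.2, h1.2]
    obtain ⟨hne, heq⟩ := P.nu_add_eq hx (by rw [contA_zero]; exact one_ne_zero) hlt
    refine ⟨by rw [contA_succ]; exact hne, ?_⟩
    rw [contA_succ, heq, hν]
    simp [Finset.sum_range_succ]
  | more n ih1 ih2 =>
    obtain ⟨hne1, hν1⟩ := ih1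
    obtain ⟨hne2, hν2⟩ := ih2
    have hf := hneg (n+2)
    have hf1 := hneg (n+1)
    have hx : f (n+2) * contA f (n+2) ≠ 0 := mul_ne_zero hf.1 hne2
    have hν : P.ν (f (n+2) * contA f (n+2))
        = P.ν (f (n+2)) + ∑ i ∈ Finset.range (n+2), P.ν (f i) := by
      rw [P.ν_mul _ _ hf.1 hne2, hν2]
    have hlt : P.ν (f (n+2) * contA f (n+2)) < P.ν (contA f (n+1)) := by
      rw [hν, hν1, Finset.sum_range_succ]
      linarith [hf.2, hf1.2]
    obtain ⟨hne, heq⟩ := P.nu_add_eq hx hne1 hlt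
    refine ⟨by rw [contA_succ]; exact hne, ?_⟩
    rw [contA_succ, heq, hν, Finset.sum_range_succ (n := n+2)]
    ring

lemma cont_eval {f : ℕ → P.K} (hneg : ∀ i, 1 ≤ i → f i ≠ 0 ∧ P.ν (f i) < 0) :
    ∀ n : ℕ, cfEval (List.ofFn fun i : Fin (n+1) => f (i : ℕ)) = contA f (n+1) / contB f (n+1) := by
  suffices H : ∀ n : ℕ, ∀ f : ℕ → P.K, (∀ i, 1 ≤ i → f i ≠ 0 ∧ P.ν (f i) < 0) →
      cfEval (List.ofFn fun i : Fin (n+1) => f (i : ℕ)) = contA f (n+1) / contB f (n+1) by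
    exact fun n => H n f hneg
  intro n
  induction n with
  | zero =>
    intro f hneg
    simp [cfEval, contA_one, contB_one]
  | succ n ih =>
    intro f hneg
    have hof : (List.ofFn fun i : Fin (n+2) => f (i : ℕ))
        = f 0 :: List.ofFn (fun i : Fin (n+1) => f ((i : ℕ) + 1)) := by
      rw [List.ofFn_succ]
      simp [Fin.val_succ]
    set f' : ℕ → P.K := fun i => f (i+1) with hf'
    have hneg' : ∀ i, f' i ≠ 0 ∧ P.ν (f' i) < 0 := fun i => hneg (i+1) (by omega)
    have hih := ih f' (fun i _ => hneg' i)
    have hA' : contA f' (n+1) ≠ 0 := (P.cont_nuA hneg' n).1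
    rw [hof]
    show f 0 + (cfEval (List.ofFn fun i : Fin (n+1) => f ((i : ℕ) + 1)))⁻¹ = _
    have : (List.ofFn fun i : Fin (n+1) => f ((i : ℕ) + 1))
        = (List.ofFn fun i : Fin (n+1) => f' (i : ℕ)) := rfl
    rw [this, hih, inv_div, add_div' _ _ _ hA']
    rw [contA_shift f (n+1), contB_shift f (n+1)]

end PuiseuxCompletion

open PuiseuxCompletion in
/-- for `z ∈ K̂` with non-terminating continued fraction,
`Σ_{i=1}^∞ deg f_i` diverges to `∞` and `z = lim x_n(z)`. -/
theorem statement7 {E : Type u} [Field E] (P : PuiseuxCompletion E)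
    (z : P.K) (f zs : ℕ → P.K)
    (h0 : zs 0 = z) (hstep : ∀ i : ℕ, P.CFStep f zs i) :
    Filter.Tendsto (fun n => ∑ i ∈ Finset.Icc 1 n, P.deg (f i))
      Filter.atTop Filter.atTop ∧
    P.TendsTo (fun n => P.approx f n) z := by
  classical
  open Polynomial in
  -- basic unpacking of the continued fraction steps
  have hmem : ∀ i, f i ∈ P.Abar := fun i => (hstep i).1
  have hν : ∀ i, 0 < P.ν (zs i - f i) := fun i => (hstep i).2.1
  have hne : ∀ i, zs i ≠ f i := fun i => (hstep i).2.2.1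
  have heq : ∀ i, zs (i + 1) = (zs i - f i)⁻¹ := fun i => (hstep i).2.2.2
  have hsubne : ∀ i, zs i - f i ≠ 0 := fun i => sub_ne_zero_of_ne (hne i)
  have hzsne : ∀ i, zs (i + 1) ≠ 0 := fun i => by
    rw [heq i]; exact inv_ne_zero (hsubne i)
  have hzsν : ∀ i, P.ν (zs (i + 1)) = -P.ν (zs i - f i) := fun i => by
    rw [heq i]; exact P.nu_inv (hsubne i)
  -- the coefficients have the same valuation as the remainders
  have hfν : ∀ i, f (i + 1) ≠ 0 ∧ P.ν (f (i + 1)) = -P.ν (zs i - f i) := by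
    intro i
    have hx : zs (i + 1) ≠ 0 := hzsne i
    have hy : -(zs (i + 1) - f (i + 1)) ≠ 0 := neg_ne_zero.mpr (hsubne (i + 1))
    have hlt : P.ν (zs (i + 1)) < P.ν (-(zs (i + 1) - f (i + 1))) := by
      rw [P.nu_neg (hsubne (i + 1)), hzsν i]
      linarith [hν i, hν (i + 1)]
    obtain ⟨h1, h2⟩ := P.nu_add_eq hx hy hlt
    have hxy : zs (i + 1) + -(zs (i + 1) - f (i + 1)) = f (i + 1) := by ring
    rw [hxy] at h1 h2
    exact ⟨h1, by rw [h2, hzsν i]⟩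
  -- degrees
  set S : ℕ → ℚ := fun n => ∑ i ∈ Finset.Icc 1 n, P.deg (f i) with hS
  have hdeg : ∀ i, P.deg (f (i + 1)) = P.ν (zs i - f i) := by
    intro i
    show -P.ν (f (i + 1)) = _
    rw [(hfν i).2]; ring
  have hdegpos : ∀ i, 1 ≤ i → 0 < P.deg (f i) := by
    intro i hi
    obtain ⟨j, rfl⟩ : ∃ j, i = j + 1 := ⟨i - 1, by omega⟩
    rw [hdeg j]; exact hν j
  have hS0 : S 0 = 0 := by simp [hS]
  have hSsucc : ∀ n, S (n + 1) = S n + P.deg (f (n + 1)) := by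
    intro n
    rw [hS]
    exact Finset.sum_Icc_succ_top (by omega) _
  have hSmono : ∀ m n, m ≤ n → S m ≤ S n := by
    intro m n hmn
    apply Finset.sum_le_sum_of_subset_of_nonneg
    · exact Finset.Icc_subset_Icc le_rfl hmn
    · intro i hi _
      exact (hdegpos i (by simp at hi; omega)).le
  have hSnonneg : ∀ n, 0 ≤ S n := fun n => hS0 ▸ hSmono 0 n (by omega)
  -- coefficients are "large" for the continuant machinery
  have hneg1 : ∀ i, 1 ≤ i → f i ≠ 0 ∧ P.ν (f i) < 0 := by
    intro i hi
    obtain ⟨j, rfl⟩ : ∃ j, i = j + 1 := ⟨i - 1, by omega⟩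
    exact ⟨(hfν j).1, by rw [(hfν j).2]; linarith [hν j]⟩
  -- valuation of the denominators
  have hB : ∀ n, contB f (n + 1) ≠ 0 ∧ P.ν (contB f (n + 1)) = -S n := by
    intro n
    match n with
    | 0 => exact ⟨by rw [contB_one]; exact one_ne_zero, by rw [contB_one, P.nu_one, hS0, neg_zero]⟩
    | Nat.succ m =>
      have hneg' : ∀ i, (fun j => f (j + 1)) i ≠ 0 ∧ P.ν ((fun j => f (j + 1)) i) < 0 :=
        fun i => hneg1 (i + 1) (by omega)
      obtain ⟨h1, h2⟩ := P.cont_nuA hneg' m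
      rw [contB_shift]
      refine ⟨h1, ?_⟩
      rw [h2]
      simp only [hS]
      rw [← Finset.Ico_add_one_right_eq_Icc, Finset.sum_Ico_eq_sum_range]
      simp only [Nat.add_sub_cancel, deg]
      rw [← Finset.sum_neg_distrib]
      apply Finset.sum_congr rfl
      intro i _
      simp [Nat.add_comm 1 i]
  -- valuation of the shifted denominators
  have hD : ∀ n, (contB f (n + 1) * zs (n + 1) + contB f n) ≠ 0 ∧
      P.ν (contB f (n + 1) * zs (n + 1) + contB f n) = -S n - P.deg (f (n + 1)) := by
    intro n
    match n with
    | 0 =>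
      have : contB f 1 * zs 1 + contB f 0 = zs 1 := by rw [contB_one, contB_zero]; ring
      rw [this]
      exact ⟨hzsne 0, by rw [hzsν 0, hS0, hdeg 0]; ring⟩
    | Nat.succ m =>
      have hx : contB f (m + 2) * zs (m + 2) ≠ 0 := mul_ne_zero (hB (m + 1)).1 (hzsne (m + 1))
      have hxν : P.ν (contB f (m + 2) * zs (m + 2)) = -S (m + 1) - P.deg (f (m + 2)) := by
        rw [P.ν_mul _ _ (hB (m + 1)).1 (hzsne (m + 1)), (hB (m + 1)).2, hzsν (m + 1),
          ← hdeg (m + 1)]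
        ring
      have hlt : P.ν (contB f (m + 2) * zs (m + 2)) < P.ν (contB f (m + 1)) := by
        rw [hxν, (hB m).2, hSsucc m]
        linarith [hdegpos (m + 1) (by omega), hdegpos (m + 2) (by omega)]
      obtain ⟨h1, h2⟩ := P.nu_add_eq hx (hB m).1 hlt
      exact ⟨h1, by rw [h2, hxν]⟩
  -- the fundamental identity
  have hZid : ∀ n, z * (contB f (n + 1) * zs (n + 1) + contB f n)
      = contA f (n + 1) * zs (n + 1) + contA f n := by
    intro n
    induction n with
    | zero =>
      have hinv : zs 1 * (zs 0 - f 0) = 1 := by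
        rw [heq 0]; exact inv_mul_cancel₀ (hsubne 0)
      rw [contB_one, contB_zero, contA_one, contA_zero, ← h0]
      linear_combination hinv
    | succ n ih =>
      have hw : zs (n + 2) * (zs (n + 1) - f (n + 1)) = 1 := by
        rw [heq (n + 1)]; exact inv_mul_cancel₀ (hsubne (n + 1))
      rw [contB_succ, contA_succ]
      linear_combination zs (n + 2) * ih + (contA f (n + 1) - z * contB f (n + 1)) * hw
  -- the approximants
  have hx : ∀ n, P.approx f n = contA f (n + 1) / contB f (n + 1) := by
    intro n
    exact P.cont_eval hneg1 n
  have happrox : ∀ n, P.approx f n - z ≠ 0 ∧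
      P.ν (P.approx f n - z) = 2 * S n + P.deg (f (n + 1)) := by
    intro n
    set D : P.K := contB f (n + 1) * zs (n + 1) + contB f n with hDdef
    have h1 : P.approx f n * contB f (n + 1) = contA f (n + 1) := by
      rw [hx n]; exact div_mul_cancel₀ _ (hB n).1
    have h2 : (P.approx f n - z) * (D * contB f (n + 1)) = (-1) ^ (n + 1) := by
      have hdet := cont_det f n
      have hzd := hZid n
      rw [pow_succ]
      linear_combination D * h1 + (-(contB f (n + 1))) * hzd - hdet
    have hDB : D * contB f (n + 1) ≠ 0 := mul_ne_zero (hD n).1 (hB n).1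
    have hform : P.approx f n - z = (-1) ^ (n + 1) / (D * contB f (n + 1)) :=
      (eq_div_iff hDB).mpr h2
    have hm1 : ((-1 : P.K)) ^ (n + 1) ≠ 0 := pow_ne_zero _ (neg_ne_zero.mpr one_ne_zero)
    have hm1ν : P.ν ((-1 : P.K) ^ (n + 1)) = 0 := by
      rw [P.nu_pow (neg_ne_zero.mpr one_ne_zero), P.nu_neg one_ne_zero, P.nu_one, mul_zero]
    constructor
    · rw [hform]; exact div_ne_zero hm1 hDB
    · rw [hform, div_eq_mul_inv, P.ν_mul _ _ hm1 (inv_ne_zero hDB), P.nu_inv hDB,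
        P.ν_mul _ _ (hD n).1 (hB n).1, (hD n).2, (hB n).2, hm1ν]
      ring
  -- Divergence of the degree sums
  have hunbdd : ∀ C : ℚ, ∃ n, C < S n := by
    by_contra hcon
    push_neg at hcon
    obtain ⟨C, hC⟩ := hcon
    obtain ⟨g, hgmem, hgz⟩ := P.dense' z (2 * C + 1)
    obtain ⟨M, hMpos, hgF⟩ := P.laurent_rep hgmem
    have hrpos : (0:ℚ) < 1 / (M:ℚ) := by positivity
    have hrnonneg : (0:ℚ) ≤ 1 / (M:ℚ) := hrpos.le
    set φ : Polynomial E → P.K := fun p => Polynomial.eval₂ P.emb (P.mono (1 / (M:ℚ))) p with hφ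
    set Inv : ℕ → P.K → Prop := fun n gn => gn ∈ P.kM M ∧
      (gn = zs n ∨ (gn - zs n ≠ 0 ∧ 2 * (C - S n) < P.ν (gn - zs n))) with hInvDef
    have hCge : ∀ n, 0 ≤ C - S n := fun n => by linarith [hC n, hSnonneg n]
    have hstep' : ∀ n gn, Inv n gn →
        (∃ p : Polynomial E, f n = φ p) ∧ ∃ g', Inv (n + 1) g' := by
      intro n gn hInv
      obtain ⟨hgnF, hinv⟩ := hInv
      have hd := hdeg n
      have hdpos : 0 < P.deg (f (n + 1)) := hdegpos _ (by omega)
      have hdC : P.deg (f (n + 1)) ≤ C - S n := by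
        have h1 := hC (n + 1); rw [hSsucc n] at h1; linarith
      have sub1 : gn - f n ≠ 0 ∧ P.ν (gn - f n) = P.deg (f (n + 1)) := by
        rcases hinv with hL | ⟨hne0, hlt⟩
        · rw [hL]; exact ⟨hsubne n, hd.symm⟩
        · have hlt2 : P.ν (zs n - f n) < P.ν (gn - zs n) := by
            rw [← hd]; linarith [hCge n]
          obtain ⟨h1, h2⟩ := P.nu_add_eq (hsubne n) hne0 hlt2
          have hxy : (zs n - f n) + (gn - zs n) = gn - f n := by ring
          rw [hxy] at h1 h2
          exact ⟨h1, by rw [h2, hd]⟩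
      obtain ⟨p, hp⟩ := P.kM_div hMpos hgnF
      replace hp : gn = φ p ∨ (gn - φ p ≠ 0 ∧ 0 < P.ν (gn - φ p)) := hp
      have habar : φ p ∈ P.Abar := P.eval_mem_abar _ hrnonneg p
      have huniq : f n = φ p := by
        apply P.abar_unique (hmem n) habar
        intro hne'
        rcases hp with hpL | ⟨hp1, hp2⟩
        · have hxy : f n - φ p = -(gn - f n) := by rw [← hpL]; ring
          rw [hxy, P.nu_neg sub1.1, sub1.2]; exact hdpos
        · have hng : f n - gn ≠ 0 := by
            rw [show f n - gn = -(gn - f n) by ring]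
            exact neg_ne_zero.mpr sub1.1
          have hνng : 0 < P.ν (f n - gn) := by
            rw [show f n - gn = -(gn - f n) by ring, P.nu_neg sub1.1, sub1.2]; exact hdpos
          have hxy : (f n - gn) + (gn - φ p) = f n - φ p := by ring
          have hmin := P.ν_add _ _ hng hp1 (hxy ▸ hne')
          rw [hxy] at hmin
          calc (0:ℚ) < min (P.ν (f n - gn)) (P.ν (gn - φ p)) := lt_min hνng hp2
            _ ≤ _ := hmin
      refine ⟨⟨p, huniq⟩, ?_⟩
      have hφF : φ p ∈ P.kM M := P.eval_mem_kM M p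
      have hfnF : f n ∈ P.kM M := huniq ▸ hφF
      refine ⟨(gn - f n)⁻¹, inv_mem (sub_mem hgnF hfnF), ?_⟩
      rcases hinv with hL | ⟨hne0, hlt⟩
      · left; rw [hL, heq n]
      · right
        have hng : zs n - gn ≠ 0 := by
          rw [show zs n - gn = -(gn - zs n) by ring]
          exact neg_ne_zero.mpr hne0
        have hid : (gn - f n)⁻¹ - zs (n + 1)
            = (zs n - gn) * ((gn - f n)⁻¹ * (zs n - f n)⁻¹) := by
          rw [heq n]
          field_simp [sub1.1, hsubne n]
          ring
        constructor
        · rw [hid]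
          exact mul_ne_zero hng (mul_ne_zero (inv_ne_zero sub1.1) (inv_ne_zero (hsubne n)))
        · rw [hid, P.ν_mul _ _ hng (mul_ne_zero (inv_ne_zero sub1.1) (inv_ne_zero (hsubne n))),
            P.ν_mul _ _ (inv_ne_zero sub1.1) (inv_ne_zero (hsubne n)),
            P.nu_inv sub1.1, P.nu_inv (hsubne n), sub1.2, ← hd,
            show zs n - gn = -(gn - zs n) by ring, P.nu_neg hne0, hSsucc n]
          linarith
    have hbase : Inv 0 g := by
      refine ⟨hgF, ?_⟩
      by_cases hzg : g = zs 0
      · left; exact hzg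
      · right
        have hne0 : g - zs 0 ≠ 0 := sub_ne_zero_of_ne hzg
        have hzgne : z - g ≠ 0 := by
          rw [show z - g = -(g - zs 0) by rw [h0]; ring]
          exact neg_ne_zero.mpr hne0
        rcases hgz with hL | hR
        · exact absurd (by rw [h0, ← hL] : g = zs 0) hzg
        · refine ⟨hne0, ?_⟩
          have hνeq : P.ν (g - zs 0) = P.ν (z - g) := by
            rw [show g - zs 0 = -(z - g) by rw [h0]; ring, P.nu_neg hzgne]
          rw [hνeq, hS0]
          linarith
    have hInvAll : ∀ n, ∃ gn, Inv n gn := by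
      intro n
      induction n with
      | zero => exact ⟨g, hbase⟩
      | succ n ih => obtain ⟨gn, hgn⟩ := ih; exact (hstep' n gn hgn).2
    have hbound : ∀ i, 1 ≤ i → 1 / (M:ℚ) ≤ P.deg (f i) := by
      intro i hi
      obtain ⟨gi, hgi⟩ := hInvAll i
      obtain ⟨⟨p, hp⟩, -⟩ := hstep' i gi hgi
      replace hp : f i = Polynomial.eval₂ P.emb (P.mono (1 / (M:ℚ))) p := hp
      have hfne : f i ≠ 0 := (hneg1 i hi).1
      have hpne : p ≠ 0 := by
        rintro rfl
        rw [Polynomial.eval₂_zero] at hp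
        exact hfne hp
      obtain ⟨-, hνp⟩ := P.nu_eval _ hrpos p hpne
      have hdegf : P.deg (f i) = (p.natDegree : ℚ) * (1 / (M:ℚ)) := by
        show -P.ν (f i) = _
        rw [hp, hνp]
        ring
      have h1 : 1 ≤ p.natDegree := by
        by_contra hh
        have h00 : p.natDegree = 0 := by omega
        rw [h00] at hdegf
        simp at hdegf
        exact absurd hdegf (hdegpos i hi).ne'
      rw [hdegf]
      have hc : (1:ℚ) ≤ (p.natDegree : ℚ) := by exact_mod_cast h1
      nlinarith [hrpos]
    obtain ⟨n, hn⟩ := exists_nat_gt (C * M)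
    have hcard : (Finset.Icc 1 n).card = n := by rw [Nat.card_Icc]; omega
    have hsum : (n : ℚ) * (1 / (M:ℚ)) ≤ S n := by
      have h2 := Finset.card_nsmul_le_sum (Finset.Icc 1 n) (fun i => P.deg (f i)) (1 / (M:ℚ))
        (fun i hiI => hbound i (by simp at hiI; omega))
      rw [hcard] at h2
      rw [hS]
      simpa [nsmul_eq_mul] using h2
    have hMQ : (0:ℚ) < (M:ℚ) := by exact_mod_cast hMpos
    have h3 : (n:ℚ) * (1 / M) ≤ C := le_trans hsum (hC n)
    have h4 : (n:ℚ) ≤ C * M := by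
      have h5 : (n:ℚ) = (n:ℚ) * (1 / M) * M := by field_simp
      rw [h5]
      exact mul_le_mul_of_nonneg_right h3 hMQ.le
    linarith
  constructor
  · rw [Filter.tendsto_atTop_atTop]
    intro b
    obtain ⟨n0, hn0⟩ := hunbdd b
    exact ⟨n0, fun n hn => le_trans hn0.le (hSmono n0 n hn)⟩
  · intro C
    obtain ⟨N, hN⟩ := hunbdd C
    refine ⟨N, fun n hn => Or.inr ?_⟩
    show C < P.ν (P.approx f n - z)
    rw [(happrox n).2]
    linarith [hSmono N n hn, hSnonneg n, hdegpos (n + 1) (by omega)]
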